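/- Let f = Σ a_n T^n and g = Σ b_n T^n be convergent power series with real coefficients, and let f · g denote their Cauchy product, (f·g)_n = Σ_{k=0}^n a_k b_{n−k}. Then for every continuous function w : ℝ → ℝ and every real x, ((f·g) • w)(x) = (f • (g • w))(x); that is, the action of convergent power series on continuous functions via iterated integration is multiplicative, making C(ℝ) a module over the ring of convergent power series. -/

import Mathlib

/-- The normalized indefinite integral: `(V w) x = ∫_0^x w(t) dt`. -/
noncomputable def V (w : ℝ → ℝ) : ℝ → ℝ := fun x => ∫ t in (0:ℝ)..x, w t

lemma V_continuous {w : ℝ → ℝ} (hw : Continuous w) : Continuous (V w) :=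
  intervalIntegral.continuous_primitive (fun a b => hw.intervalIntegrable a b) 0

lemma V_iter_continuous {w : ℝ → ℝ} (hw : Continuous w) : ∀ n, Continuous (V^[n] w) := by
  intro n
  induction n with
  | zero => simpa using hw
  | succ n ih => rw [Function.iterate_succ_apply']; exact V_continuous ih

lemma abs_integral_abs_pow (n : ℕ) (y : ℝ) :
    |∫ t in (0:ℝ)..y, |t| ^ n| = |y| ^ (n + 1) / (n + 1) := by
  rcases le_or_gt 0 y with hy | hy
  · have h1 : ∫ t in (0:ℝ)..y, |t| ^ n = ∫ t in (0:ℝ)..y, t ^ n := by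
      apply intervalIntegral.integral_congr
      intro t ht
      rw [Set.uIcc_of_le hy] at ht
      show |t| ^ n = t ^ n
      rw [abs_of_nonneg ht.1]
    rw [h1, integral_pow, abs_div]
    congr 1
    · simp [abs_pow]
    · rw [abs_of_nonneg]; positivity
  · have h1 : ∫ t in (0:ℝ)..y, |t| ^ n = ∫ t in (0:ℝ)..y, (-1) ^ n * t ^ n := by
      apply intervalIntegral.integral_congr
      intro t ht
      rw [Set.uIcc_of_ge hy.le] at ht
      show |t| ^ n = (-1) ^ n * t ^ n
      rw [abs_of_nonpos ht.2, neg_pow]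
    rw [h1, intervalIntegral.integral_const_mul, integral_pow, abs_mul, abs_pow, abs_neg,
      abs_one, one_pow, one_mul, abs_div]
    congr 1
    · simp [abs_pow]
    · rw [abs_of_nonneg]; positivity

lemma mem_uIcc_abs_le {y t : ℝ} (ht : t ∈ Set.uIcc 0 y) : |t| ≤ |y| := by
  rcases le_total 0 y with h | h
  · rw [Set.uIcc_of_le h, Set.mem_Icc] at ht
    rw [abs_of_nonneg ht.1, abs_of_nonneg h]; exact ht.2
  · rw [Set.uIcc_of_ge h, Set.mem_Icc] at ht
    rw [abs_of_nonpos ht.2, abs_of_nonpos h]; exact neg_le_neg ht.1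

lemma V_iter_bound {w : ℝ → ℝ} (hw : Continuous w) {R M : ℝ}
    (hM : ∀ t : ℝ, |t| ≤ R → |w t| ≤ M) :
    ∀ (n : ℕ) (y : ℝ), |y| ≤ R → |V^[n] w y| ≤ M * |y| ^ n / n.factorial := by
  intro n
  induction n with
  | zero =>
    intro y hy
    simpa using hM y hy
  | succ n ih =>
    intro y hy
    have hM0 : 0 ≤ M := le_trans (abs_nonneg _) (hM y hy)
    rw [Function.iterate_succ_apply']
    have key : ‖∫ t in (0:ℝ)..y, V^[n] w t‖ ≤ |∫ t in (0:ℝ)..y, M * |t| ^ n / n.factorial| := by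
      apply intervalIntegral.norm_integral_le_abs_of_norm_le
      · filter_upwards [MeasureTheory.ae_restrict_mem measurableSet_uIoc] with t ht
        have hty : |t| ≤ |y| := mem_uIcc_abs_le (Set.uIoc_subset_uIcc ht)
        rw [Real.norm_eq_abs]
        exact ih t (hty.trans hy)
      · apply Continuous.intervalIntegrable
        exact ((continuous_const.mul ((continuous_abs).pow n)).div_const _)
    have h2 : |∫ t in (0:ℝ)..y, M * |t| ^ n / n.factorial| = M / n.factorial * |∫ t in (0:ℝ)..y, |t| ^ n| := by
      have : ∀ t : ℝ, M * |t| ^ n / n.factorial = (M / n.factorial) * |t| ^ n := by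
        intro t; ring
      simp_rw [this]
      rw [intervalIntegral.integral_const_mul, abs_mul, abs_of_nonneg (by positivity : (0:ℝ) ≤ M / n.factorial)]
    calc |V (V^[n] w) y| ≤ |∫ t in (0:ℝ)..y, M * |t| ^ n / n.factorial| := by
          rw [← Real.norm_eq_abs (V (V^[n] w) y)]; exact key
      _ = M / n.factorial * (|y| ^ (n + 1) / (n + 1)) := by rw [h2, abs_integral_abs_pow]
      _ = M * |y| ^ (n+1) / (n+1).factorial := by
          rw [Nat.factorial_succ]
          push_cast
          rw [div_mul_div_comm, mul_comm ((n.factorial : ℝ))]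

lemma summable_aux {b : ℕ → ℝ} {r : ℝ} (hr : 0 < r)
    (hb : Summable fun n => |b n| * r ^ n) {R : ℝ} (hR : 0 ≤ R) :
    Summable fun m => |b m| * R ^ m / m.factorial := by
  have hle : ∀ m, |b m| * r ^ m ≤ ∑' n, |b n| * r ^ n := fun m =>
    Summable.le_tsum hb m (fun n _ => by positivity)
  set C := ∑' n, |b n| * r ^ n with hC
  have hsum : Summable fun m => C * ((R / r) ^ m / m.factorial) :=
    (Real.summable_pow_div_factorial (R / r)).mul_left C
  have hcomp : ∀ m, |b m| * R ^ m / m.factorial ≤ C * ((R / r) ^ m / m.factorial) := by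
    intro m
    have h1 : |b m| ≤ C / r ^ m := by
      rw [le_div_iff₀ (by positivity)]
      exact hle m
    calc |b m| * R ^ m / m.factorial ≤ (C / r ^ m) * R ^ m / m.factorial := by
          gcongr
      _ = C * ((R / r) ^ m / m.factorial) := by
          rw [div_pow]; ring
  exact Summable.of_nonneg_of_le (fun m => by positivity) hcomp hsum

lemma factorial_bound (n m : ℕ) {y M c : ℝ} (hM : 0 ≤ M) (hc : 0 ≤ c) :
    c * (M * |y| ^ (n + m) / (n + m).factorial)
      ≤ (M * |y| ^ n / n.factorial) * (c * |y| ^ m / m.factorial) := by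
  have hfact : ((n.factorial : ℝ) * m.factorial) ≤ ((n + m).factorial : ℝ) := by
    exact_mod_cast Nat.le_of_dvd (n + m).factorial_pos
      (Nat.factorial_mul_factorial_dvd_factorial_add n m)
  have hX : (0:ℝ) ≤ c * M * |y| ^ (n + m) :=
    mul_nonneg (mul_nonneg hc hM) (pow_nonneg (abs_nonneg _) _)
  have h3 : (0:ℝ) < (n.factorial : ℝ) * m.factorial := by positivity
  calc c * (M * |y| ^ (n + m) / (n + m).factorial)
      = (c * M * |y| ^ (n + m)) / ((n + m).factorial : ℝ) := by ring
    _ ≤ (c * M * |y| ^ (n + m)) / ((n.factorial : ℝ) * m.factorial) := by gcongr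
    _ = (M * |y| ^ n / n.factorial) * (c * |y| ^ m / m.factorial) := by
        rw [pow_add]; ring

set_option maxHeartbeats 1000000 in
/-- The action of convergent power series on continuous functions via iterated
integration is multiplicative: `(f·g) • w = f • (g • w)`, where `f·g` is the
Cauchy product. -/
theorem action_mul (a b : ℕ → ℝ)
    (ha : ∃ r : ℝ, 0 < r ∧ Summable (fun n => |a n| * r ^ n))
    (hb : ∃ r : ℝ, 0 < r ∧ Summable (fun n => |b n| * r ^ n))
    (w : ℝ → ℝ) (hw : Continuous w) (x : ℝ) :
    ∑' n, (∑ k ∈ Finset.range (n + 1), a k * b (n - k)) * (V^[n] w) x =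
      ∑' n, a n * (V^[n] (fun y => ∑' m, b m * (V^[m] w) y)) x := by
  obtain ⟨ra, hra, hsa⟩ := ha
  obtain ⟨rb, hrb, hsb⟩ := hb
  have key : ∀ (n : ℕ) (y : ℝ),
      (V^[n] (fun t => ∑' m, b m * (V^[m] w) t)) y = ∑' m, b m * (V^[n + m] w) y := by
    intro n
    induction n with
    | zero => intro y; simp
    | succ n ih =>
      intro y
      rw [Function.iterate_succ_apply']
      have hfe : V^[n] (fun t => ∑' m, b m * (V^[m] w) t)
          = fun t => ∑' m, b m * (V^[n + m] w) t := funext ih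
      rw [hfe]
      obtain ⟨M, hM⟩ : ∃ M, ∀ t : ℝ, |t| ≤ |y| → |w t| ≤ M := by
        obtain ⟨M, hM⟩ := (isCompact_Icc (a := -|y|) (b := |y|)).exists_bound_of_continuousOn
          hw.continuousOn
        exact ⟨M, fun t ht => hM t (abs_le.1 ht)⟩
      have hM0 : 0 ≤ M := (abs_nonneg _).trans (hM 0 (by simp))
      set G : ℕ → C(ℝ, ℝ) := fun m =>
        ⟨fun t => b m * (V^[n + m] w) t, continuous_const.mul (V_iter_continuous hw _)⟩ with hG
    -- sup-norm bound
      have hnorm : ∀ m,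
          ‖(G m).restrict (⟨Set.uIcc 0 y, isCompact_uIcc⟩ : TopologicalSpace.Compacts ℝ)‖
            ≤ (M * |y| ^ n / n.factorial) * (|b m| * |y| ^ m / m.factorial) := by
        intro m
        apply (ContinuousMap.norm_le _ (by positivity)).2
        rintro ⟨t, ht⟩
        rw [ContinuousMap.restrict_apply]
        simp only [hG, ContinuousMap.coe_mk, Real.norm_eq_abs, abs_mul]
        have h1 : |(V^[n + m] w) t| ≤ M * |t| ^ (n + m) / (n + m).factorial :=
          V_iter_bound hw hM (n + m) t (le_trans (mem_uIcc_abs_le ht) le_rfl)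
        calc |b m| * |(V^[n + m] w) t|
            ≤ |b m| * (M * |t| ^ (n + m) / (n + m).factorial) := by
              gcongr
          _ ≤ |b m| * (M * |y| ^ (n + m) / (n + m).factorial) := by
              have ht2 : |t| ≤ |y| := mem_uIcc_abs_le ht
              gcongr
          _ ≤ (M * |y| ^ n / n.factorial) * (|b m| * |y| ^ m / m.factorial) :=
              factorial_bound n m hM0 (abs_nonneg _)
      have hsumnorm : Summable (fun m =>
          ‖(G m).restrict (⟨Set.uIcc 0 y, isCompact_uIcc⟩ : TopologicalSpace.Compacts ℝ)‖) :=
        Summable.of_nonneg_of_le (fun m => norm_nonneg _) hnorm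
          (((summable_aux hrb hsb (abs_nonneg y)).mul_left (M * |y| ^ n / n.factorial)))
      have swap := intervalIntegral.tsum_intervalIntegral_eq_of_summable_norm
        (a := 0) (b := y) hsumnorm
      simp only [hG, ContinuousMap.coe_mk] at swap
      show (∫ t in (0:ℝ)..y, ∑' m, b m * (V^[n + m] w) t) = _
      rw [← swap]
      apply tsum_congr
      intro m
      rw [intervalIntegral.integral_const_mul]
      congr 1
      rw [show n + 1 + m = (n + m) + 1 by omega, Function.iterate_succ_apply']
      rfl
  -- bound for F
  obtain ⟨M, hM⟩ : ∃ M, ∀ t : ℝ, |t| ≤ |x| → |w t| ≤ M := by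
    obtain ⟨M, hM⟩ := (isCompact_Icc (a := -|x|) (b := |x|)).exists_bound_of_continuousOn
      hw.continuousOn
    exact ⟨M, fun t ht => hM t (abs_le.1 ht)⟩
  have hM0 : 0 ≤ M := (abs_nonneg _).trans (hM 0 (by simp))
  set F : ℕ × ℕ → ℝ := fun p => a p.1 * (b p.2 * (V^[p.1 + p.2] w) x) with hF_def
  have hFbound : ∀ p : ℕ × ℕ, |F p| ≤
      (M * |x| ^ p.1 / p.1.factorial * |a p.1|) * (|b p.2| * |x| ^ p.2 / p.2.factorial) := by
    rintro ⟨k, m⟩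
    simp only [hF_def, abs_mul]
    have h1 : |(V^[k + m] w) x| ≤ M * |x| ^ (k + m) / (k + m).factorial :=
      V_iter_bound hw hM (k + m) x le_rfl
    calc |a k| * (|b m| * |(V^[k + m] w) x|)
        ≤ |a k| * (|b m| * (M * |x| ^ (k + m) / (k + m).factorial)) := by gcongr
      _ ≤ |a k| * ((M * |x| ^ k / k.factorial) * (|b m| * |x| ^ m / m.factorial)) :=
          mul_le_mul_of_nonneg_left (factorial_bound k m hM0 (abs_nonneg _)) (abs_nonneg _)
      _ = (M * |x| ^ k / k.factorial * |a k|) * (|b m| * |x| ^ m / m.factorial) := by ring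
  have hprod : Summable (fun p : ℕ × ℕ =>
      (M * |x| ^ p.1 / p.1.factorial * |a p.1|) * (|b p.2| * |x| ^ p.2 / p.2.factorial)) := by
    have hsa2 : Summable (fun k => M * |x| ^ k / k.factorial * |a k|) :=
      ((summable_aux hra hsa (abs_nonneg x)).mul_left M).congr (fun k => by ring)
    exact Summable.mul_of_nonneg hsa2 (summable_aux hrb hsb (abs_nonneg x))
      (fun k => by positivity) (fun m => by positivity)
  have hF : Summable F :=
    summable_abs_iff.1 (Summable.of_nonneg_of_le (fun p => abs_nonneg _) hFbound hprod)
  -- RHS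
  have hRHS : ∑' n, a n * (V^[n] (fun y => ∑' m, b m * (V^[m] w) y)) x = ∑' p, F p := by
    calc ∑' n, a n * (V^[n] (fun y => ∑' m, b m * (V^[m] w) y)) x
        = ∑' n, ∑' m, F (n, m) := by
          apply tsum_congr
          intro n
          rw [key n x, ← tsum_mul_left]
      _ = ∑' p, F p := (Summable.tsum_prod' hF fun n => hF.prod_factor n).symm
  -- LHS
  have hsig : Summable (fun q : Σ n : ℕ, Finset.HasAntidiagonal.antidiagonal n => F q.2) :=
    Finset.HasAntidiagonal.sigmaAntidiagonalEquivProd.summable_iff.2 hF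
  have hLHS : ∑' n, (∑ k ∈ Finset.range (n + 1), a k * b (n - k)) * (V^[n] w) x = ∑' p, F p := by
    have step1 : ∀ n : ℕ, (∑ k ∈ Finset.range (n + 1), a k * b (n - k)) * (V^[n] w) x
        = ∑ ij ∈ Finset.HasAntidiagonal.antidiagonal n, F ij := by
      intro n
      rw [Finset.Nat.sum_antidiagonal_eq_sum_range_succ_mk, Finset.sum_mul]
      apply Finset.sum_congr rfl
      intro k hk
      have hkn : k ≤ n := Nat.lt_succ_iff.1 (Finset.mem_range.1 hk)
      simp only [hF_def]
      rw [Nat.add_sub_cancel' hkn]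
      ring
    calc ∑' n, (∑ k ∈ Finset.range (n + 1), a k * b (n - k)) * (V^[n] w) x
        = ∑' n, ∑ ij ∈ Finset.HasAntidiagonal.antidiagonal n, F ij := tsum_congr step1
      _ = ∑' n, ∑' ij : Finset.HasAntidiagonal.antidiagonal n, F ij :=
          tsum_congr fun n => (Finset.tsum_subtype _ F).symm
      _ = ∑' q : Σ n : ℕ, Finset.HasAntidiagonal.antidiagonal n, F q.2 :=
          (Summable.tsum_sigma' (fun n => (hasSum_fintype _).summable) hsig).symm
      _ = ∑' p, F p := Finset.HasAntidiagonal.sigmaAntidiagonalEquivProd.tsum_eq _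
  rw [hLHS, hRHS]
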